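/- Let N ∈ (1,∞), p > N/2 and K < 0. Define h(t) := sinh(√(−K/(N−1))·t)^{N−1} for t > 0 and v(r) := ∫₀^r h(t) dt. Then the improper integral ∫₀^∞ h(t)·(t/v(t))^{1+1/(2p−1)} dt is finite. -/

import Mathlib

set_option maxHeartbeats 1000000


open Real MeasureTheory Set Filter

/-- sinh x ≤ x * exp x for x ≥ 0. -/
lemma sinh_le_self_mul_exp {x : ℝ} (hx : 0 ≤ x) : Real.sinh x ≤ x * Real.exp x := by
  rw [Real.sinh_eq]
  have h1 : 1 - 2 * x ≤ Real.exp (-(2 * x)) := by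
    have := Real.add_one_le_exp (-(2 * x)); linarith
  have h2 : Real.exp (-x) = Real.exp x * Real.exp (-(2*x)) := by
    rw [← Real.exp_add]; ring_nf
  have h3 : 0 < Real.exp x := Real.exp_pos x
  nlinarith [Real.exp_pos (-(2*x))]

/-- exp x / 4 ≤ sinh x for x ≥ 1. -/
lemma exp_div_four_le_sinh {x : ℝ} (hx : 1 ≤ x) : Real.exp x / 4 ≤ Real.sinh x := by
  rw [Real.sinh_eq]
  have h2 : Real.exp (-x) ≤ Real.exp x / 2 := by
    have h1 : Real.exp (-x) * 2 ≤ Real.exp x := by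
      rw [show Real.exp x = Real.exp (-x) * Real.exp (2 * x) by rw [← Real.exp_add]; ring_nf]
      have : (2:ℝ) ≤ Real.exp (2 * x) := by
        calc (2:ℝ) ≤ 1 + 2 * x := by linarith
        _ ≤ Real.exp (2 * x) := by have := Real.add_one_le_exp (2*x); linarith
      nlinarith [Real.exp_pos (-x)]
    linarith
  linarith
/-- sinh x ≤ exp x. -/
lemma sinh_le_exp' (x : ℝ) : Real.sinh x ≤ Real.exp x := by
  rw [Real.sinh_eq]
  have := Real.exp_pos (-x)
  have := Real.exp_pos x
  linarith

/-- for `N ∈ (1,∞)`, `p > N/2` and `K < 0`, with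
`h(t) = sinh(√(−K/(N−1)) t)^{N−1}` and `v(r) = ∫₀^r h`, the integral
`∫₀^∞ h(t) (t/v(t))^{1+1/(2p−1)} dt` is finite. -/
theorem bishopGromov_constant_integrable_negative_curvature
    (N p K : ℝ) (hN : 1 < N) (hp : N / 2 < p) (hK : K < 0) :
    IntegrableOn
      (fun t : ℝ =>
        Real.sinh (Real.sqrt (-K / (N - 1)) * t) ^ (N - 1) *
          (t / ∫ s in Set.Ioo (0:ℝ) t,
              Real.sinh (Real.sqrt (-K / (N - 1)) * s) ^ (N - 1)) ^ (1 + 1 / (2 * p - 1)))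
      (Set.Ioi 0) := by
  have hm : (0:ℝ) < N - 1 := by linarith
  have ha : 0 < Real.sqrt (-K / (N - 1)) := Real.sqrt_pos.mpr (div_pos (by linarith) hm)
  set a := Real.sqrt (-K / (N - 1)) with ha_def
  set m := N - 1 with hm_def
  set q := 1 + 1 / (2 * p - 1) with hq_def
  have h2p : m < 2 * p - 1 := by rw [hm_def]; linarith
  have h2p0 : (0:ℝ) < 2 * p - 1 := by linarith
  have hq1 : 1 < q := by
    have : 0 < 1 / (2 * p - 1) := by positivity
    rw [hq_def]; linarith
  have hq0 : (0:ℝ) ≤ q := by linarith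
  have hmq : m * (q - 1) < 1 := by
    have hq' : q - 1 = 1 / (2 * p - 1) := by rw [hq_def]; ring
    rw [hq', mul_one_div, div_lt_one h2p0]; linarith
  set h : ℝ → ℝ := fun s => Real.sinh (a * s) ^ m with hh_def
  set v : ℝ → ℝ := fun t => ∫ s in Set.Ioo (0:ℝ) t, h s with hv_def
  have hsinh_eq : ∀ x : ℝ, Real.sinh (a * x) ^ m = h x := fun x => rfl
  have hveq : ∀ t : ℝ, (∫ s in Set.Ioo (0:ℝ) t, h s) = v t := fun t => rfl
  simp only [hsinh_eq, hveq]
  have hcont : Continuous h := by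
    apply Continuous.rpow_const
    · exact Real.continuous_sinh.comp (continuous_const.mul continuous_id)
    · exact fun x => Or.inr hm.le
  have hnn : ∀ s : ℝ, 0 ≤ s → 0 ≤ h s := fun s hs =>
    Real.rpow_nonneg (Real.sinh_nonneg_iff.mpr (mul_nonneg ha.le hs)) _
  have hposh : ∀ s : ℝ, 0 < s → 0 < h s := fun s hs =>
    Real.rpow_pos_of_pos (Real.sinh_pos_iff.mpr (mul_pos ha hs)) _
  have hmono : ∀ ⦃s t : ℝ⦄, 0 ≤ s → s ≤ t → h s ≤ h t := fun s t hs hst =>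
    Real.rpow_le_rpow (Real.sinh_nonneg_iff.mpr (mul_nonneg ha.le hs))
      (Real.sinh_le_sinh.mpr (mul_le_mul_of_nonneg_left hst ha.le)) hm.le
  have hIntOn : ∀ b c : ℝ, IntegrableOn h (Set.Ioo b c) := fun b c =>
    (hcont.integrableOn_Icc).mono_set Set.Ioo_subset_Icc_self
  have hm1 : (0:ℝ) < m + 1 := by linarith
  -- lower bound for v near zero
  have hvlb1 : ∀ t : ℝ, 0 < t → a ^ m * t ^ (m + 1) / (m + 1) ≤ v t := by
    intro t ht
    have key : ∫ s in Set.Ioo (0:ℝ) t, a ^ m * s ^ m ≤ v t := by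
      rw [hv_def]
      apply setIntegral_mono_on
      · exact ((continuous_const.mul
          (continuous_id.rpow_const fun x => Or.inr hm.le)).integrableOn_Icc).mono_set
          Set.Ioo_subset_Icc_self
      · exact hIntOn 0 t
      · exact measurableSet_Ioo
      · intro s hs
        have h1 : a * s ≤ Real.sinh (a * s) :=
          le_of_lt (Real.self_lt_sinh_iff.mpr (mul_pos ha hs.1))
        calc a ^ m * s ^ m = (a * s) ^ m := (Real.mul_rpow ha.le hs.1.le).symm
          _ ≤ Real.sinh (a * s) ^ m :=
            Real.rpow_le_rpow (mul_nonneg ha.le hs.1.le) h1 hm.le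
    refine le_trans (le_of_eq ?_) key
    rw [← integral_Ioc_eq_integral_Ioo, ← intervalIntegral.integral_of_le ht.le,
      intervalIntegral.integral_const_mul, integral_rpow (Or.inl (by linarith : (-1:ℝ) < m)),
      Real.zero_rpow (by linarith : m + 1 ≠ 0)]
    ring
  have hvpos : ∀ t : ℝ, 0 < t → 0 < v t := fun t ht =>
    lt_of_lt_of_le (div_pos (mul_pos (Real.rpow_pos_of_pos ha m)
      (Real.rpow_pos_of_pos ht (m + 1))) hm1) (hvlb1 t ht)
  set T : ℝ := 1 + 1 / a with hT_def
  have hainv : 0 < 1 / a := by positivity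
  have hT1 : 1 ≤ T := by rw [hT_def]; linarith
  have hT0 : 0 < T := by linarith
  -- lower bound for v in the tail
  have hvlb2 : ∀ t : ℝ, T ≤ t → h (t - 1) ≤ v t := by
    intro t ht
    have ht1 : 0 < t - 1 := by
      have : (1:ℝ) + 1 / a ≤ t := by rw [← hT_def]; exact ht
      linarith
    have hsub : Set.Ioo (t - 1) t ⊆ Set.Ioo 0 t := fun s hs => ⟨lt_trans ht1 hs.1, hs.2⟩
    have step1 : ∫ s in Set.Ioo (t - 1) t, h s ≤ v t := by
      rw [hv_def]
      apply setIntegral_mono_set (hIntOn 0 t)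
      · exact (ae_restrict_iff' measurableSet_Ioo).mpr (ae_of_all _ fun s hs => hnn s hs.1.le)
      · exact HasSubset.Subset.eventuallyLE hsub
    have step2 : h (t - 1) ≤ ∫ s in Set.Ioo (t - 1) t, h s := by
      have hconst : ∫ _ in Set.Ioo (t - 1) t, h (t - 1) ≤ ∫ s in Set.Ioo (t - 1) t, h s := by
        apply setIntegral_mono_on
        · exact integrableOn_const measure_Ioo_lt_top.ne
        · exact hIntOn _ _
        · exact measurableSet_Ioo
        · intro s hs; exact hmono ht1.le hs.1.le
      rwa [setIntegral_const, Real.volume_real_Ioo_of_le (by linarith), show t - (t - 1) = 1 by ring,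
        one_smul] at hconst
    linarith
  -- continuity of v on (0, ∞)
  have hvcont : ContinuousOn v (Set.Ioi 0) := by
    have hprim : Continuous fun t => ∫ s in (0:ℝ)..t, h s :=
      intervalIntegral.continuous_primitive (fun b c => hcont.intervalIntegrable b c) 0
    refine hprim.continuousOn.congr fun t ht => ?_
    rw [hv_def]
    simp only
    rw [intervalIntegral.integral_of_le (le_of_lt ht), integral_Ioc_eq_integral_Ioo]
  have hfcont : ContinuousOn (fun t => h t * (t / v t) ^ q) (Set.Ioi 0) := by
    apply ContinuousOn.mul hcont.continuousOn
    apply ContinuousOn.rpow_const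
    · exact continuousOn_id.div hvcont fun t ht => (hvpos t ht).ne'
    · exact fun t ht => Or.inr hq0
  rw [← Set.Ioc_union_Ioi_eq_Ioi hT0.le]
  apply MeasureTheory.IntegrableOn.union
  · -- near zero
    set C1 : ℝ := (a * Real.exp (a * T)) ^ m * ((m + 1) / a ^ m) ^ q with hC1_def
    have hbound : ∀ t ∈ Set.Ioc (0:ℝ) T, ‖h t * (t / v t) ^ q‖ ≤ C1 * t ^ (m * (1 - q)) := by
      intro t ht
      obtain ⟨ht0, htT⟩ := ht
      have hvt := hvpos t ht0
      have htm : (0:ℝ) < t ^ m := Real.rpow_pos_of_pos ht0 m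
      have ham : (0:ℝ) < a ^ m := Real.rpow_pos_of_pos ha m
      have hnorm : ‖h t * (t / v t) ^ q‖ = h t * (t / v t) ^ q := by
        rw [Real.norm_eq_abs, abs_of_nonneg]
        exact mul_nonneg (hnn t ht0.le) (Real.rpow_nonneg (div_nonneg ht0.le hvt.le) q)
      have hb1 : h t ≤ (a * Real.exp (a * T)) ^ m * t ^ m := by
        have hs1 : Real.sinh (a * t) ≤ a * Real.exp (a * T) * t := by
          have h1 := sinh_le_self_mul_exp (mul_nonneg ha.le ht0.le)
          have h2 : Real.exp (a * t) ≤ Real.exp (a * T) :=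
            Real.exp_le_exp.mpr (mul_le_mul_of_nonneg_left htT ha.le)
          nlinarith [mul_le_mul_of_nonneg_left h2 (mul_nonneg ha.le ht0.le)]
        calc h t ≤ (a * Real.exp (a * T) * t) ^ m :=
              Real.rpow_le_rpow (Real.sinh_nonneg_iff.mpr (mul_nonneg ha.le ht0.le)) hs1 hm.le
          _ = (a * Real.exp (a * T)) ^ m * t ^ m :=
              Real.mul_rpow (by positivity) ht0.le
      have hb2 : (t / v t) ^ q ≤ ((m + 1) / a ^ m) ^ q * ((t ^ m)⁻¹) ^ q := by
        have hd : t / v t ≤ (m + 1) / a ^ m * (t ^ m)⁻¹ := by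
          have h5 : t / v t ≤ t / (a ^ m * t ^ (m + 1) / (m + 1)) :=
            div_le_div_of_nonneg_left ht0.le
              (div_pos (mul_pos ham (Real.rpow_pos_of_pos ht0 (m + 1))) hm1) (hvlb1 t ht0)
          refine le_trans h5 (le_of_eq ?_)
          rw [Real.rpow_add ht0, Real.rpow_one]
          field_simp
        calc (t / v t) ^ q ≤ ((m + 1) / a ^ m * (t ^ m)⁻¹) ^ q :=
              Real.rpow_le_rpow (div_nonneg ht0.le hvt.le) hd hq0
          _ = ((m + 1) / a ^ m) ^ q * ((t ^ m)⁻¹) ^ q :=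
              Real.mul_rpow (by positivity) (by positivity)
      have hpow : t ^ m * ((t ^ m)⁻¹) ^ q = t ^ (m * (1 - q)) := by
        rw [← Real.rpow_neg ht0.le m, ← Real.rpow_mul ht0.le, ← Real.rpow_add ht0]
        congr 1
        ring
      calc ‖h t * (t / v t) ^ q‖ = h t * (t / v t) ^ q := hnorm
        _ ≤ ((a * Real.exp (a * T)) ^ m * t ^ m) * (((m + 1) / a ^ m) ^ q * ((t ^ m)⁻¹) ^ q) := by
            apply mul_le_mul hb1 hb2 (Real.rpow_nonneg (div_nonneg ht0.le hvt.le) q)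
            positivity
        _ = C1 * (t ^ m * ((t ^ m)⁻¹) ^ q) := by rw [hC1_def]; ring
        _ = C1 * t ^ (m * (1 - q)) := by rw [hpow]
    have hint : IntegrableOn (fun t => C1 * t ^ (m * (1 - q))) (Set.Ioc 0 T) := by
      apply Integrable.const_mul
      have hexp : (-1:ℝ) < m * (1 - q) := by nlinarith
      have := intervalIntegral.intervalIntegrable_rpow' (a := 0) (b := T) hexp
      rwa [intervalIntegrable_iff_integrableOn_Ioc_of_le hT0.le] at this
    apply Integrable.mono' hint
    · exact ((hfcont.mono Set.Ioc_subset_Ioi_self).aestronglyMeasurable measurableSet_Ioc)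
    · exact (ae_restrict_iff' measurableSet_Ioc).mpr (ae_of_all _ hbound)
  · -- tail
    set c : ℝ := a * m * (q - 1) with hc_def
    have hc : 0 < c := by
      have : 0 < q - 1 := by linarith
      rw [hc_def]; positivity
    have hb : 0 < c / 2 := by linarith
    apply integrable_of_isBigO_exp_neg hb
      (hfcont.mono fun x hx => lt_of_lt_of_le hT0 hx)
    set C2 : ℝ := ((4:ℝ) ^ m) ^ q * Real.exp (a * m * q) with hC2_def
    have hO1 : (fun t => h t * (t / v t) ^ q) =O[atTop]
        fun t => t ^ q * Real.exp (-c * t) := by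
      apply Asymptotics.IsBigO.of_bound C2
      rw [eventually_atTop]
      refine ⟨T, fun t ht => ?_⟩
      have ht0 : 0 < t := lt_of_lt_of_le hT0 ht
      have hvt := hvpos t ht0
      have h4m : (0:ℝ) < (4:ℝ) ^ m := Real.rpow_pos_of_pos (by norm_num) m
      have hat1 : 1 ≤ a * (t - 1) := by
        have h6 : 1 / a ≤ t - 1 := by
          have : (1:ℝ) + 1 / a ≤ t := by rw [← hT_def]; exact ht
          linarith
        calc (1:ℝ) = a * (1 / a) := by field_simp
          _ ≤ a * (t - 1) := mul_le_mul_of_nonneg_left h6 ha.le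
      have ht1 : 0 < t - 1 := by
        have : (1:ℝ) + 1 / a ≤ t := by rw [← hT_def]; exact ht
        linarith
      -- upper bound on h t
      have hu : h t ≤ Real.exp (a * m * t) := by
        calc h t ≤ Real.exp (a * t) ^ m :=
              Real.rpow_le_rpow (Real.sinh_nonneg_iff.mpr (mul_nonneg ha.le ht0.le))
                (sinh_le_exp' _) hm.le
          _ = Real.exp (a * m * t) := by rw [← Real.exp_mul]; ring_nf
      -- lower bound on h (t - 1)
      have hl : Real.exp (a * m * (t - 1)) / (4:ℝ) ^ m ≤ h (t - 1) := by
        have hs := exp_div_four_le_sinh hat1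
        calc Real.exp (a * m * (t - 1)) / (4:ℝ) ^ m
            = (Real.exp (a * (t - 1)) / 4) ^ m := by
              rw [Real.div_rpow (Real.exp_pos _).le (by norm_num), ← Real.exp_mul]
              ring_nf
          _ ≤ Real.sinh (a * (t - 1)) ^ m :=
              Real.rpow_le_rpow (by positivity) hs hm.le
      have hv2 : Real.exp (a * m * (t - 1)) / (4:ℝ) ^ m ≤ v t :=
        le_trans hl (hvlb2 t ht)
      have hdiv : t / v t ≤ t * ((4:ℝ) ^ m * Real.exp (-(a * m) * (t - 1))) := by
        have h5 : t / v t ≤ t / (Real.exp (a * m * (t - 1)) / (4:ℝ) ^ m) :=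
          div_le_div_of_nonneg_left ht0.le (by positivity) hv2
        refine le_trans h5 (le_of_eq ?_)
        rw [show -(a * m) * (t - 1) = -(a * m * (t - 1)) by ring, Real.exp_neg]
        field_simp
      have hdq : (t / v t) ^ q ≤
          t ^ q * (((4:ℝ) ^ m) ^ q * Real.exp (-(a * m) * (t - 1) * q)) := by
        calc (t / v t) ^ q ≤ (t * ((4:ℝ) ^ m * Real.exp (-(a * m) * (t - 1)))) ^ q :=
              Real.rpow_le_rpow (div_nonneg ht0.le hvt.le) hdiv hq0
          _ = t ^ q * (((4:ℝ) ^ m) ^ q * Real.exp (-(a * m) * (t - 1) * q)) := by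
              rw [Real.mul_rpow ht0.le (by positivity),
                Real.mul_rpow h4m.le (Real.exp_pos _).le, ← Real.exp_mul]
      have hE : Real.exp (a * m * t) * Real.exp (-(a * m) * (t - 1) * q) =
          Real.exp (a * m * q) * Real.exp (-c * t) := by
        rw [← Real.exp_add, ← Real.exp_add, hc_def]
        congr 1
        ring
      have hfnn : 0 ≤ h t * (t / v t) ^ q :=
        mul_nonneg (hnn t ht0.le) (Real.rpow_nonneg (div_nonneg ht0.le hvt.le) q)
      have hgnn : 0 ≤ t ^ q * Real.exp (-c * t) :=
        mul_nonneg (Real.rpow_nonneg ht0.le q) (Real.exp_pos _).le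
      rw [Real.norm_eq_abs, Real.norm_eq_abs, abs_of_nonneg hfnn, abs_of_nonneg hgnn]
      calc h t * (t / v t) ^ q
          ≤ Real.exp (a * m * t) *
              (t ^ q * (((4:ℝ) ^ m) ^ q * Real.exp (-(a * m) * (t - 1) * q))) := by
            apply mul_le_mul hu hdq
              (Real.rpow_nonneg (div_nonneg ht0.le hvt.le) q) (Real.exp_pos _).le
        _ = ((4:ℝ) ^ m) ^ q *
              (Real.exp (a * m * t) * Real.exp (-(a * m) * (t - 1) * q)) * t ^ q := by
            ring
        _ = C2 * (t ^ q * Real.exp (-c * t)) := by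
            rw [hE, hC2_def]; ring
    refine hO1.trans ?_
    have htend := tendsto_rpow_mul_exp_neg_mul_atTop_nhds_zero q (c / 2) hb
    have hsplit : (fun t : ℝ => t ^ q * Real.exp (-c * t)) =
        fun t => (t ^ q * Real.exp (-(c / 2) * t)) * Real.exp (-(c / 2) * t) := by
      funext t
      rw [mul_assoc, ← Real.exp_add]
      ring_nf
    rw [hsplit]
    simpa using (htend.isBigO_one ℝ).mul
      (Asymptotics.isBigO_refl (fun t : ℝ => Real.exp (-(c / 2) * t)) atTop)
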